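/- Let ν be a non-degenerate probability measure on ℝ with support contained in (−∞, b]. Then for all real z₁, z₂ with b < z₁ < z₂ one has the strict inequality G_ν(z₁) − G_ν(z₂) > (z₂ − z₁) G_ν(z₁) G_ν(z₂); equivalently, 1/G_ν(z₂) − 1/G_ν(z₁) > z₂ − z₁. -/

import Mathlib

open MeasureTheory Filter Topology Set
open scoped ENNReal

/-- The Cauchy transform `G_ν(z) = ∫ 1/(z-x) dν(x)` of a measure on `ℝ`, for real `z`. -/
noncomputable def cauchyT (ν : Measure ℝ) (z : ℝ) : ℝ := ∫ x, (z - x)⁻¹ ∂ν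

section Aux

variable {ν : Measure ℝ} [IsProbabilityMeasure ν] {b : ℝ}

lemma cauchy_ae_le (hb : ν (Set.Ioi b) = 0) : ∀ᵐ x ∂ν, x ≤ b := by
  rw [ae_iff]
  simpa [Set.Ioi, not_le] using hb

lemma integrable_of_ae_abs_bound {α : Type*} {m : MeasurableSpace α} {μ : Measure α}
    [IsFiniteMeasure μ] {f : α → ℝ} (hm : Measurable f) {C : ℝ}
    (h : ∀ᵐ x ∂μ, |f x| ≤ C) : Integrable f μ :=
  ⟨hm.aestronglyMeasurable, HasFiniteIntegral.of_bounded (by simpa [Real.norm_eq_abs] using h)⟩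

lemma cauchy_meas (z : ℝ) : Measurable fun x : ℝ => (z - x)⁻¹ :=
  (measurable_const.sub measurable_id).inv

lemma cauchy_bound {z x : ℝ} (hz : b < z) (hx : x ≤ b) :
    0 < (z - x)⁻¹ ∧ (z - x)⁻¹ ≤ (z - b)⁻¹ := by
  have h1 : 0 < z - b := by linarith
  have h2 : 0 < z - x := by linarith
  exact ⟨inv_pos.2 h2, inv_anti₀ h1 (by linarith)⟩

lemma cauchy_integrable (hb : ν (Set.Ioi b) = 0) {z : ℝ} (hz : b < z) :
    Integrable (fun x => (z - x)⁻¹) ν := by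
  refine integrable_of_ae_abs_bound (cauchy_meas z) (C := (z - b)⁻¹) ?_
  filter_upwards [cauchy_ae_le hb] with x hx
  rw [abs_of_pos (cauchy_bound hz hx).1]
  exact (cauchy_bound hz hx).2

lemma cauchy_Iic_one (hb : ν (Set.Ioi b) = 0) : ν (Set.Iic b) = 1 :=
  (prob_compl_eq_zero_iff measurableSet_Iic).mp (by rwa [compl_Iic])

lemma cauchy_pos (hb : ν (Set.Ioi b) = 0) {z : ℝ} (hz : b < z) :
    0 < ∫ x, (z - x)⁻¹ ∂ν := by
  rw [integral_pos_iff_support_of_nonneg_ae ?_ (cauchy_integrable hb hz)]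
  · refine lt_of_lt_of_le ?_ (measure_mono (fun x (hx : x ∈ Set.Iic b) =>
      (ne_of_gt (cauchy_bound hz hx).1 : (z - x)⁻¹ ≠ 0)))
    rw [cauchy_Iic_one hb]; norm_num
  · filter_upwards [cauchy_ae_le hb] with x hx
    exact (cauchy_bound hz hx).1.le

lemma cauchy_strict_mono {z x y : ℝ} (hz : b < z) (hx : x ≤ b) (hy : y ≤ b) (hxy : x < y) :
    (z - x)⁻¹ < (z - y)⁻¹ := by
  have h2 : 0 < z - y := by linarith
  exact inv_strictAnti₀ h2 (by linarith)

/-- If a probability measure gives mass 1 to a singleton, it is a Dirac measure. -/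
lemma eq_dirac_of_singleton_one {a : ℝ} (ha : ν {a} = 1) : ν = Measure.dirac a := by
  have hc : ν {a}ᶜ = 0 := (prob_compl_eq_zero_iff (measurableSet_singleton a)).2 ha
  ext s hs
  rw [Measure.dirac_apply' a hs]
  by_cases has : a ∈ s
  · rw [Set.indicator_of_mem has]
    refine le_antisymm prob_le_one ?_
    calc (1 : ℝ≥0∞) = ν {a} := ha.symm
      _ ≤ ν s := measure_mono (by simpa using has)
  · rw [Set.indicator_of_notMem has]
    have hsub : s ⊆ ({a} : Set ℝ)ᶜ := fun x hx hxa =>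
      has (Set.mem_singleton_iff.mp hxa ▸ hx)
    exact le_antisymm ((measure_mono hsub).trans hc.le) (zero_le)

/-- For a non-degenerate probability measure, the diagonal has product measure `< 1`. -/
lemma diag_lt_one (hnd : ∀ a : ℝ, ν ≠ Measure.dirac a) :
    (ν.prod ν) (Set.diagonal ℝ) < 1 := by
  have hdm : MeasurableSet (Set.diagonal ℝ) := isClosed_diagonal.measurableSet
  have hpre : ∀ x : ℝ, (Prod.mk x ⁻¹' Set.diagonal ℝ) = {x} := by
    intro x; ext y
    simp [Set.mem_diagonal_iff, eq_comm]
  have hda : (ν.prod ν) (Set.diagonal ℝ) = ∫⁻ x, ν {x} ∂ν := by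
    rw [Measure.prod_apply hdm]
    simp only [hpre]
  have gmeas : Measurable fun x : ℝ => ν {x} := by
    have := measurable_measure_prodMk_left (ν := ν) hdm
    simpa only [hpre] using this
  by_contra hcon
  push_neg at hcon
  have hone : (ν.prod ν) (Set.diagonal ℝ) = 1 := le_antisymm prob_le_one hcon
  rw [hda] at hone
  have gle : ∀ x : ℝ, ν {x} ≤ 1 := fun x => prob_le_one
  have hsub : ∫⁻ x, (1 - ν {x}) ∂ν = 0 := by
    rw [lintegral_sub gmeas (by rw [hone]; exact ENNReal.one_ne_top) (ae_of_all _ gle)]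
    simp [hone]
  have hae1 : ∀ᵐ x ∂ν, (1 : ℝ≥0∞) - ν {x} = 0 :=
    (lintegral_eq_zero_iff (measurable_const.sub gmeas)).mp hsub
  have hae2 : ∀ᵐ x ∂ν, ν {x} = 1 := by
    filter_upwards [hae1] with x hx
    exact le_antisymm (gle x) (tsub_eq_zero_iff_le.mp hx)
  haveI : (ae ν).NeBot := ae_neBot.mpr (IsProbabilityMeasure.ne_zero ν)
  obtain ⟨a, ha⟩ := hae2.exists
  exact hnd a (eq_dirac_of_singleton_one ha)

/-- The key strict Chebyshev-correlation inequality. -/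
lemma cauchy_cov (ν : Measure ℝ) [IsProbabilityMeasure ν]
    (hnd : ∀ a : ℝ, ν ≠ Measure.dirac a)
    (b : ℝ) (hb : ν (Set.Ioi b) = 0) {z₁ z₂ : ℝ} (h1 : b < z₁) (h12 : z₁ < z₂) :
    (∫ x, (z₁ - x)⁻¹ ∂ν) * (∫ x, (z₂ - x)⁻¹ ∂ν) < ∫ x, (z₁ - x)⁻¹ * (z₂ - x)⁻¹ ∂ν := by
  have h2 : b < z₂ := h1.trans h12
  set f₁ : ℝ → ℝ := fun x => (z₁ - x)⁻¹ with hf₁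
  set f₂ : ℝ → ℝ := fun x => (z₂ - x)⁻¹ with hf₂
  have m₁ : Measurable f₁ := cauchy_meas z₁
  have m₂ : Measurable f₂ := cauchy_meas z₂
  set F : ℝ × ℝ → ℝ := fun p => (f₁ p.1 - f₁ p.2) * (f₂ p.1 - f₂ p.2) with hF
  have mF : Measurable F := ((m₁.comp measurable_fst).sub (m₁.comp measurable_snd)).mul
    ((m₂.comp measurable_fst).sub (m₂.comp measurable_snd))
  have haeP : ∀ᵐ p ∂(ν.prod ν), p.1 ≤ b ∧ p.2 ≤ b :=
    (Measure.quasiMeasurePreserving_fst.ae (cauchy_ae_le hb)).and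
      (Measure.quasiMeasurePreserving_snd.ae (cauchy_ae_le hb))
  -- bounds
  have hbd : ∀ {z x : ℝ}, b < z → x ≤ b → |(z - x)⁻¹| ≤ (z - b)⁻¹ := by
    intro z x hz hx
    rw [abs_of_pos (cauchy_bound hz hx).1]
    exact (cauchy_bound hz hx).2
  set C₁ : ℝ := (z₁ - b)⁻¹
  set C₂ : ℝ := (z₂ - b)⁻¹
  -- integrability of all pieces on the product
  have i11 : Integrable (fun p : ℝ × ℝ => f₁ p.1 * f₂ p.1) (ν.prod ν) := by
    refine integrable_of_ae_abs_bound ((m₁.comp measurable_fst).mul (m₂.comp measurable_fst))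
      (C := C₁ * C₂) ?_
    filter_upwards [haeP] with p hp
    rw [abs_mul]
    exact mul_le_mul (hbd h1 hp.1) (hbd h2 hp.1) (abs_nonneg _)
      (le_trans (abs_nonneg _) (hbd h1 hp.1))
  have i22 : Integrable (fun p : ℝ × ℝ => f₁ p.2 * f₂ p.2) (ν.prod ν) := by
    refine integrable_of_ae_abs_bound ((m₁.comp measurable_snd).mul (m₂.comp measurable_snd))
      (C := C₁ * C₂) ?_
    filter_upwards [haeP] with p hp
    rw [abs_mul]
    exact mul_le_mul (hbd h1 hp.2) (hbd h2 hp.2) (abs_nonneg _)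
      (le_trans (abs_nonneg _) (hbd h1 hp.2))
  have i12 : Integrable (fun p : ℝ × ℝ => f₁ p.1 * f₂ p.2) (ν.prod ν) := by
    refine integrable_of_ae_abs_bound ((m₁.comp measurable_fst).mul (m₂.comp measurable_snd))
      (C := C₁ * C₂) ?_
    filter_upwards [haeP] with p hp
    rw [abs_mul]
    exact mul_le_mul (hbd h1 hp.1) (hbd h2 hp.2) (abs_nonneg _)
      (le_trans (abs_nonneg _) (hbd h1 hp.1))
  have i21 : Integrable (fun p : ℝ × ℝ => f₁ p.2 * f₂ p.1) (ν.prod ν) := by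
    refine integrable_of_ae_abs_bound ((m₁.comp measurable_snd).mul (m₂.comp measurable_fst))
      (C := C₁ * C₂) ?_
    filter_upwards [haeP] with p hp
    rw [abs_mul]
    exact mul_le_mul (hbd h1 hp.2) (hbd h2 hp.1) (abs_nonneg _)
      (le_trans (abs_nonneg _) (hbd h1 hp.2))
  -- integrals of the pieces
  have hfst : ∀ (h : ℝ → ℝ), Measurable h →
      ∫ p, h p.1 ∂(ν.prod ν) = ∫ x, h x ∂ν := by
    intro h hm
    rw [← integral_map measurable_fst.aemeasurable hm.aestronglyMeasurable,
      Measure.map_fst_prod, measure_univ, one_smul]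
  have hsnd : ∀ (h : ℝ → ℝ), Measurable h →
      ∫ p, h p.2 ∂(ν.prod ν) = ∫ x, h x ∂ν := by
    intro h hm
    rw [← integral_map measurable_snd.aemeasurable hm.aestronglyMeasurable,
      Measure.map_snd_prod, measure_univ, one_smul]
  have e11 : ∫ p, f₁ p.1 * f₂ p.1 ∂(ν.prod ν) = ∫ x, f₁ x * f₂ x ∂ν :=
    hfst (fun x => f₁ x * f₂ x) (m₁.mul m₂)
  have e22 : ∫ p, f₁ p.2 * f₂ p.2 ∂(ν.prod ν) = ∫ x, f₁ x * f₂ x ∂ν :=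
    hsnd (fun x => f₁ x * f₂ x) (m₁.mul m₂)
  have e12 : ∫ p, f₁ p.1 * f₂ p.2 ∂(ν.prod ν) = (∫ x, f₁ x ∂ν) * ∫ x, f₂ x ∂ν :=
    integral_prod_mul f₁ f₂
  have e21 : ∫ p, f₁ p.2 * f₂ p.1 ∂(ν.prod ν) = (∫ x, f₂ x ∂ν) * ∫ x, f₁ x ∂ν := by
    have hcomm : ∫ p, f₁ p.2 * f₂ p.1 ∂(ν.prod ν) = ∫ p, f₂ p.1 * f₁ p.2 ∂(ν.prod ν) := by
      congr 1; funext p; ring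
    rw [hcomm]; exact integral_prod_mul f₂ f₁
  -- expansion of the double integral
  have key : ∫ p, F p ∂(ν.prod ν)
      = 2 * ((∫ x, f₁ x * f₂ x ∂ν) - (∫ x, f₁ x ∂ν) * ∫ x, f₂ x ∂ν) := by
    have hexp : ∫ p, F p ∂(ν.prod ν) = ∫ p : ℝ × ℝ,
        (f₁ p.1 * f₂ p.1 + f₁ p.2 * f₂ p.2 - (f₁ p.1 * f₂ p.2 + f₁ p.2 * f₂ p.1))
        ∂(ν.prod ν) := by
      apply integral_congr_ae
      filter_upwards with p
      simp only [hF]; ring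
    calc ∫ p, F p ∂(ν.prod ν)
        = ∫ p : ℝ × ℝ, (f₁ p.1 * f₂ p.1 + f₁ p.2 * f₂ p.2
            - (f₁ p.1 * f₂ p.2 + f₁ p.2 * f₂ p.1)) ∂(ν.prod ν) := hexp
      _ = (∫ p : ℝ × ℝ, (f₁ p.1 * f₂ p.1 + f₁ p.2 * f₂ p.2) ∂(ν.prod ν))
            - ∫ p : ℝ × ℝ, (f₁ p.1 * f₂ p.2 + f₁ p.2 * f₂ p.1) ∂(ν.prod ν) :=
          integral_sub (i11.add i22) (i12.add i21)
      _ = ((∫ p : ℝ × ℝ, f₁ p.1 * f₂ p.1 ∂(ν.prod ν)) + ∫ p : ℝ × ℝ, f₁ p.2 * f₂ p.2 ∂(ν.prod ν))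
            - ((∫ p : ℝ × ℝ, f₁ p.1 * f₂ p.2 ∂(ν.prod ν))
              + ∫ p : ℝ × ℝ, f₁ p.2 * f₂ p.1 ∂(ν.prod ν)) := by
          rw [integral_add i11 i22, integral_add i12 i21]
      _ = 2 * ((∫ x, f₁ x * f₂ x ∂ν) - (∫ x, f₁ x ∂ν) * ∫ x, f₂ x ∂ν) := by
          rw [e11, e22, e12, e21]; ring
  -- positivity of the double integral
  have hInt : Integrable F (ν.prod ν) := by
    have hexp : F = fun p : ℝ × ℝ =>
        (f₁ p.1 * f₂ p.1 + f₁ p.2 * f₂ p.2) - (f₁ p.1 * f₂ p.2 + f₁ p.2 * f₂ p.1) := by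
      funext p; simp only [hF]; ring
    rw [hexp]
    exact (i11.add i22).sub (i12.add i21)
  have hnn : 0 ≤ᵐ[ν.prod ν] F := by
    filter_upwards [haeP] with p hp
    show (0:ℝ) ≤ (f₁ p.1 - f₁ p.2) * (f₂ p.1 - f₂ p.2)
    rcases lt_trichotomy p.1 p.2 with hlt | heq | hlt
    · have a1 : f₁ p.1 < f₁ p.2 := cauchy_strict_mono h1 hp.1 hp.2 hlt
      have a2 : f₂ p.1 < f₂ p.2 := cauchy_strict_mono h2 hp.1 hp.2 hlt
      nlinarith
    · simp [heq]
    · have a1 : f₁ p.2 < f₁ p.1 := cauchy_strict_mono h1 hp.2 hp.1 hlt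
      have a2 : f₂ p.2 < f₂ p.1 := cauchy_strict_mono h2 hp.2 hp.1 hlt
      nlinarith
  have hsupp : 0 < (ν.prod ν) (Function.support F) := by
    have hsub : (Set.Iic b ×ˢ Set.Iic b) \ Set.diagonal ℝ ⊆ Function.support F := by
      rintro ⟨x, y⟩ ⟨⟨hx, hy⟩, hxy⟩
      have hne : x ≠ y := fun h => hxy (by simpa [Set.mem_diagonal_iff] using h)
      rcases hne.lt_or_gt with hlt | hlt
      · have a1 : f₁ x < f₁ y := cauchy_strict_mono h1 hx hy hlt
        have a2 : f₂ x < f₂ y := cauchy_strict_mono h2 hx hy hlt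
        have hpos : (0:ℝ) < (f₁ x - f₁ y) * (f₂ x - f₂ y) :=
          mul_pos_of_neg_of_neg (by linarith) (by linarith)
        exact ne_of_gt hpos
      · have a1 : f₁ y < f₁ x := cauchy_strict_mono h1 hy hx hlt
        have a2 : f₂ y < f₂ x := cauchy_strict_mono h2 hy hx hlt
        have hpos : (0:ℝ) < (f₁ x - f₁ y) * (f₂ x - f₂ y) :=
          mul_pos (by linarith) (by linarith)
        exact ne_of_gt hpos
    refine lt_of_lt_of_le (lt_of_lt_of_le ?_ le_measure_diff) (measure_mono hsub)
    have hB : (ν.prod ν) (Set.Iic b ×ˢ Set.Iic b) = 1 := by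
      rw [Measure.prod_prod, cauchy_Iic_one hb, one_mul]
    rw [hB]
    exact tsub_pos_of_lt (diag_lt_one hnd)
  have hFpos : 0 < ∫ p, F p ∂(ν.prod ν) :=
    (integral_pos_iff_support_of_nonneg_ae hnn hInt).mpr hsupp
  rw [key] at hFpos
  linarith

end Aux

/-- for a non-degenerate probability measure `ν` with support in `(-∞, b]`
and `b < z₁ < z₂` one has `G_ν(z₁) - G_ν(z₂) > (z₂ - z₁) G_ν(z₁) G_ν(z₂)`;
equivalently `1/G_ν(z₂) - 1/G_ν(z₁) > z₂ - z₁`. -/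
theorem cauchy_strict_inequality
    (ν : Measure ℝ) [IsProbabilityMeasure ν]
    (hnd : ∀ a : ℝ, ν ≠ Measure.dirac a)
    (b : ℝ) (hb : ν (Set.Ioi b) = 0) :
    ∀ z₁ z₂ : ℝ, b < z₁ → z₁ < z₂ →
      cauchyT ν z₁ - cauchyT ν z₂ > (z₂ - z₁) * cauchyT ν z₁ * cauchyT ν z₂ ∧
      1 / cauchyT ν z₂ - 1 / cauchyT ν z₁ > z₂ - z₁ := by
  intro z₁ z₂ hz₁ h12
  have h2 : b < z₂ := hz₁.trans h12
  have G1pos : 0 < cauchyT ν z₁ := cauchy_pos hb hz₁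
  have G2pos : 0 < cauchyT ν z₂ := cauchy_pos hb h2
  have hkey := cauchy_cov ν hnd b hb hz₁ h12
  have hdiff : cauchyT ν z₁ - cauchyT ν z₂
      = (z₂ - z₁) * ∫ x, (z₁ - x)⁻¹ * (z₂ - x)⁻¹ ∂ν := by
    rw [cauchyT, cauchyT, ← integral_sub (cauchy_integrable hb hz₁) (cauchy_integrable hb h2),
      ← integral_const_mul]
    apply integral_congr_ae
    filter_upwards [cauchy_ae_le hb] with x hx
    have hx1 : z₁ - x > 0 := by linarith
    have hx2 : z₂ - x > 0 := by linarith
    field_simp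
    ring
  have part1 : cauchyT ν z₁ - cauchyT ν z₂ > (z₂ - z₁) * cauchyT ν z₁ * cauchyT ν z₂ := by
    rw [hdiff]
    have hz : 0 < z₂ - z₁ := by linarith
    have hk : cauchyT ν z₁ * cauchyT ν z₂ < ∫ x, (z₁ - x)⁻¹ * (z₂ - x)⁻¹ ∂ν := hkey
    nlinarith
  refine ⟨part1, ?_⟩
  have heq : 1 / cauchyT ν z₂ - 1 / cauchyT ν z₁
      = (cauchyT ν z₁ - cauchyT ν z₂) / (cauchyT ν z₁ * cauchyT ν z₂) := by
    rw [div_sub_div _ _ (ne_of_gt G2pos) (ne_of_gt G1pos)]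
    ring
  rw [gt_iff_lt, heq, lt_div_iff₀ (mul_pos G1pos G2pos)]
  calc (z₂ - z₁) * (cauchyT ν z₁ * cauchyT ν z₂)
      = (z₂ - z₁) * cauchyT ν z₁ * cauchyT ν z₂ := by ring
    _ < cauchyT ν z₁ - cauchyT ν z₂ := part1
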